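/- For n ≥ 1 and n+1 ≤ i ≤ 2n, the commutative algebra k[[a,b]]/(ab, a²+b^{2n+1}+b^{2i}) is isomorphic to k[[a,b]]/(ab, a²+b^{2n+1}). -/

import Mathlib

noncomputable section

variable {k : Type*} [Field k] [CharZero k]

abbrev PS (k : Type*) [Field k] := MvPowerSeries (Fin 2) k

def pa : PS k := MvPowerSeries.X 0
def pb : PS k := MvPowerSeries.X 1

lemma unit_one_add_pow (m : ℕ) (hm : 1 ≤ m) : IsUnit ((1 : PS k) + (pb : PS k) ^ m) := by
  rw [MvPowerSeries.isUnit_iff_constantCoeff]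
  have : MvPowerSeries.constantCoeff ((pb : PS k) ^ m) = 0 := by
    rw [pb, map_pow, MvPowerSeries.constantCoeff_X, zero_pow (by omega)]
  simp [this]

omit [CharZero k] in
lemma key_mem {I : Ideal (PS k)} (c : PS k)
    (h1 : (pa : PS k) * pb ∈ I) (h2 : (pa : PS k)^2 + c ∈ I)
    (m : ℕ) (u : PS k) (hu : IsUnit u)
    (hc : pb * c = pb ^ m * u) : (pb : PS k) ^ m ∈ I := by
  obtain ⟨v, hv⟩ := hu
  have hmem : (pb : PS k) ^ m * u ∈ I := by
    rw [← hc]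
    have : (pb : PS k) * c = pb * ((pa : PS k)^2 + c) - pa * (pa * pb) := by ring
    rw [this]
    exact sub_mem (I.mul_mem_left _ h2) (I.mul_mem_left _ h1)
  have : (pb : PS k) ^ m = (pb ^ m * u) * (↑v⁻¹ : PS k) := by
    rw [mul_assoc, ← hv, Units.mul_inv, mul_one]
  rw [this]
  exact I.mul_mem_right _ hmem

/-- For n+1 ≤ i ≤ 2n, k[[a,b]]/(ab, a²+b^{2n+1}+b^{2i}) ≅ k[[a,b]]/(ab, a²+b^{2n+1}). -/
theorem abelianization_iso (n i : ℕ) (hn : 1 ≤ n) (hi : n + 1 ≤ i) (hi2 : i ≤ 2*n) :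
    Nonempty
      ((PS k ⧸ Ideal.span {(pa : PS k) * pb,
          (pa : PS k)^2 + pb ^ (2*n+1) + pb ^ (2*i)}) ≃ₐ[k]
        (PS k ⧸ Ideal.span {(pa : PS k) * pb, (pa : PS k)^2 + pb ^ (2*n+1)})) := by
  set I : Ideal (PS k) :=
    Ideal.span {(pa : PS k) * pb, (pa : PS k)^2 + pb ^ (2*n+1) + pb ^ (2*i)} with hI
  set J : Ideal (PS k) :=
    Ideal.span {(pa : PS k) * pb, (pa : PS k)^2 + pb ^ (2*n+1)} with hJ
  have habI : (pa : PS k) * pb ∈ I := Ideal.subset_span (by simp)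
  have habJ : (pa : PS k) * pb ∈ J := Ideal.subset_span (by simp)
  have hfI : (pa : PS k)^2 + pb ^ (2*n+1) + pb ^ (2*i) ∈ I := Ideal.subset_span (by simp)
  have hgJ : (pa : PS k)^2 + pb ^ (2*n+1) ∈ J := Ideal.subset_span (by simp)
  -- b^{2n+2} ∈ I
  have hbI : (pb : PS k) ^ (2*n+2) ∈ I := by
    apply key_mem ((pb : PS k) ^ (2*n+1) + pb ^ (2*i)) habI (by rwa [add_assoc] at hfI) _
      (1 + pb ^ (2*i - 2*n - 1)) (unit_one_add_pow _ (by omega))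
    have h1 : 2*i + 1 = 2*n+2 + (2*i - 2*n - 1) := by omega
    calc (pb : PS k) * ((pb : PS k) ^ (2*n+1) + pb ^ (2*i))
        = pb ^ (2*n+2) + pb ^ (2*i+1) := by ring
      _ = pb ^ (2*n+2) * (1 + pb ^ (2*i - 2*n - 1)) := by rw [h1, pow_add]; ring
  -- b^{2n+2} ∈ J
  have hbJ : (pb : PS k) ^ (2*n+2) ∈ J := by
    apply key_mem ((pb : PS k) ^ (2*n+1)) habJ hgJ _ 1 isUnit_one
    rw [mul_one]; ring
  have hpow : ∀ (K : Ideal (PS k)), (pb : PS k) ^ (2*n+2) ∈ K → (pb : PS k) ^ (2*i) ∈ K := by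
    intro K hK
    have : (pb : PS k) ^ (2*i) = pb ^ (2*i - (2*n+2)) * pb ^ (2*n+2) := by
      rw [← pow_add]; congr 1; omega
    rw [this]; exact K.mul_mem_left _ hK
  have hIJ : I = J := by
    apply le_antisymm
    · rw [hI, Ideal.span_le]
      rintro x (rfl | rfl)
      · exact habJ
      · exact add_mem hgJ (hpow J hbJ)
    · rw [hJ, Ideal.span_le]
      rintro x (rfl | rfl)
      · exact habI
      · have heq : (pa : PS k)^2 + pb ^ (2*n+1)
            = ((pa : PS k)^2 + pb ^ (2*n+1) + pb ^ (2*i)) - pb ^ (2*i) := by ring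
        rw [heq]
        exact sub_mem hfI (hpow I hbI)
  exact ⟨Ideal.quotientEquivAlgOfEq k hIJ⟩

end
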